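/- With the dynamic-programming value function V defined semantically as in the context, the following recursion holds. Let x, y ∈ {1,…,n} with max(x, y) = h < n, where x = y is allowed only if x ∈ S, and suppose S ∩ {min(x,y)+1, …, h} = ∅ when x ≠ y. Then for every integer m: if h+1 ∈ S, then V(x, y, m) = c_{x, h+1} + c_{h+1, y} + V(h+1, h+1, m+1); and if h+1 ∉ S, then V(x, y, m) = min( c_{x, h+1} + V(h+1, y, m), c_{h+1, y} + V(x, h+1, m+1) ), where by convention the minimum of an empty set of feasible completions is +∞. -/

import Mathlib

/-- Length of a walk along a list of nodes (sum of consecutive edge costs). -/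
def pathLen (C : ℕ → ℕ → ℝ) : List ℕ → ℝ
  | [] => 0
  | [_] => 0
  | a :: b :: t => C a b + pathLen C (b :: t)

/-- `(A, B)` is a feasible completion from `(x, y)`:
`A ∪ B = {h+1,…,n}` and `A ∩ B = S ∩ {h+1,…,n}` where `h = max x y`. -/
def IsFeasCompl (n : ℕ) (S : Finset ℕ) (x y : ℕ) (A B : Finset ℕ) : Prop :=
  A ∪ B = Finset.Icc (max x y + 1) n ∧ A ∩ B = S ∩ Finset.Icc (max x y + 1) n

/-- Length of the feasible completion `(A, B)` from `(x, y)`: the walk goes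
from `x` through the elements of `A` in increasing order to node `1`, and
then from node `1` through the elements of `B` in decreasing order to `y`. -/
noncomputable def complLen (C : ℕ → ℕ → ℝ) (x y : ℕ) (A B : Finset ℕ) : ℝ :=
  pathLen C (x :: (A.sort (· ≤ ·) ++ [1])) +
    pathLen C (1 :: ((B.sort (· ≤ ·)).reverse ++ [y]))

/-- The semantically defined dynamic-programming value function `V(x, y, m)`:
the minimum length over all feasible completions `(A, B)` from `(x, y)`
respecting the balance window `⌈(n+|S|−p)/2⌉ ≤ m + |B| ≤ ⌊(n+|S|+p)/2⌋`;
it is `+∞` if no such completion exists, or if `x ≠ y` and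
`S ∩ {min(x,y)+1,…,max(x,y)} ≠ ∅`. -/
noncomputable def V (n : ℕ) (C : ℕ → ℕ → ℝ) (S : Finset ℕ) (p : ℕ)
    (x y : ℕ) (m : ℤ) : EReal :=
  if x ≠ y ∧ (S ∩ Finset.Icc (min x y + 1) (max x y)).Nonempty then ⊤
  else
    ⨅ AB : {AB : Finset ℕ × Finset ℕ //
        IsFeasCompl n S x y AB.1 AB.2 ∧
        ⌈((n : ℚ) + S.card - p) / 2⌉ ≤ m + AB.2.card ∧
        m + AB.2.card ≤ ⌊((n : ℚ) + S.card + p) / 2⌋},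
      ((complLen C x y AB.1.1 AB.1.2 : ℝ) : EReal)

lemma pathLen_concat (C : ℕ → ℕ → ℝ) : ∀ (l : List ℕ) (a b : ℕ),
    pathLen C (l ++ [a, b]) = pathLen C (l ++ [a]) + C a b
  | [], a, b => by simp [pathLen]
  | [c], a, b => by simp [pathLen]
  | c :: d :: l, a, b => by
    have ih := pathLen_concat C (d :: l) a b
    show pathLen C (c :: ((d :: l) ++ [a, b])) = pathLen C (c :: ((d :: l) ++ [a])) + C a b
    rw [show (c :: ((d :: l) ++ [a, b])) = c :: d :: (l ++ [a, b]) from rfl,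
        show (c :: ((d :: l) ++ [a])) = c :: d :: (l ++ [a]) from rfl]
    simp only [pathLen]
    rw [show (d :: (l ++ [a, b])) = (d :: l) ++ [a, b] from rfl,
        show (d :: (l ++ [a])) = (d :: l) ++ [a] from rfl, ih]
    ring

lemma sort_insert' {k : ℕ} {A : Finset ℕ} (hA : ∀ a ∈ A, k < a) :
    (insert k A).sort (· ≤ ·) = k :: A.sort (· ≤ ·) :=
  Finset.sort_insert (· ≤ ·) (fun b hb => (hA b hb).le) (fun h => lt_irrefl k (hA k h))

lemma complLen_insert_left (C : ℕ → ℕ → ℝ) (x y k : ℕ) (A B : Finset ℕ)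
    (hA : ∀ a ∈ A, k < a) :
    complLen C x y (insert k A) B = C x k + complLen C k y A B := by
  unfold complLen
  rw [sort_insert' hA]
  show pathLen C (x :: k :: (A.sort (· ≤ ·) ++ [1])) + _ = _
  rw [show pathLen C (x :: k :: (A.sort (· ≤ ·) ++ [1]))
      = C x k + pathLen C (k :: (A.sort (· ≤ ·) ++ [1])) from rfl]
  ring

lemma complLen_insert_right (C : ℕ → ℕ → ℝ) (x y k : ℕ) (A B : Finset ℕ)
    (hB : ∀ b ∈ B, k < b) :
    complLen C x y A (insert k B) = C k y + complLen C x k A B := by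
  unfold complLen
  rw [sort_insert' hB, List.reverse_cons, List.append_assoc]
  have h1 : pathLen C (1 :: ((B.sort (· ≤ ·)).reverse ++ ([k] ++ [y])))
      = pathLen C ((1 :: (B.sort (· ≤ ·)).reverse) ++ [k, y]) := by
    simp
  have h2 : pathLen C (1 :: ((B.sort (· ≤ ·)).reverse ++ [k]))
      = pathLen C ((1 :: (B.sort (· ≤ ·)).reverse) ++ [k]) := by
    simp
  rw [h1, pathLen_concat, ← h2]
  ring

lemma ereal_add_iInf {ι : Sort*} (c : ℝ) (f : ι → EReal) :
    (c : EReal) + ⨅ i, f i = ⨅ i, ((c : EReal) + f i) := by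
  have key : ∀ (d : ℝ) (g : ι → EReal), (d : EReal) + ⨅ i, g i ≤ ⨅ i, ((d : EReal) + g i) :=
    fun d g => le_iInf fun i => add_le_add_right (iInf_le g i) _
  refine le_antisymm (key c f) ?_
  have h2 := key (-c) (fun i => (c : EReal) + f i)
  have h3 : ∀ z : EReal, (c : EReal) + (((-c : ℝ) : EReal) + z) = z := by
    intro z
    rw [← add_assoc, ← EReal.coe_add]
    norm_num
  calc ⨅ i, ((c : EReal) + f i)
      = (c : EReal) + (((-c : ℝ) : EReal) + ⨅ i, ((c : EReal) + f i)) := (h3 _).symm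
    _ ≤ (c : EReal) + ⨅ i, f i := by
        refine add_le_add_right (h2.trans (le_of_eq ?_)) _
        exact iInf_congr fun i => by rw [← add_assoc, ← EReal.coe_add]; norm_num

/-- auxiliary normalized feasibility predicate -/
def Feas (n : ℕ) (S : Finset ℕ) (k : ℕ) (A B : Finset ℕ) : Prop :=
  A ∪ B = Finset.Icc k n ∧ A ∩ B = S ∩ Finset.Icc k n

lemma isFeas_of_feas {n : ℕ} {S : Finset ℕ} {x y : ℕ} {A B : Finset ℕ}
    (h : Feas n S (max x y + 1) A B) : IsFeasCompl n S x y A B := h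

lemma feas_of_isFeas {n : ℕ} {S : Finset ℕ} {x y : ℕ} {A B : Finset ℕ}
    (h : IsFeasCompl n S x y A B) : Feas n S (max x y + 1) A B := h

lemma Feas.mem_union {n : ℕ} {S : Finset ℕ} {k : ℕ} {A B : Finset ℕ}
    (hf : Feas n S k A B) (i : ℕ) : (i ∈ A ∨ i ∈ B) ↔ (k ≤ i ∧ i ≤ n) := by
  rw [← Finset.mem_union, hf.1, Finset.mem_Icc]

lemma Feas.mem_inter {n : ℕ} {S : Finset ℕ} {k : ℕ} {A B : Finset ℕ}
    (hf : Feas n S k A B) (i : ℕ) : (i ∈ A ∧ i ∈ B) ↔ (i ∈ S ∧ k ≤ i ∧ i ≤ n) := by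
  rw [← Finset.mem_inter, hf.2, Finset.mem_inter, Finset.mem_Icc]

lemma feas_of_mem {n : ℕ} {S : Finset ℕ} {k : ℕ} {A B : Finset ℕ}
    (h1 : ∀ i, (i ∈ A ∨ i ∈ B) ↔ (k ≤ i ∧ i ≤ n))
    (h2 : ∀ i, (i ∈ A ∧ i ∈ B) ↔ (i ∈ S ∧ k ≤ i ∧ i ≤ n)) : Feas n S k A B := by
  constructor
  · ext i; rw [Finset.mem_union, Finset.mem_Icc]; exact h1 i
  · ext i; rw [Finset.mem_inter, Finset.mem_inter, Finset.mem_Icc]; exact h2 i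

lemma Feas.lt_of_mem_left {n : ℕ} {S : Finset ℕ} {k : ℕ} {A B : Finset ℕ}
    (hf : Feas n S (k + 1) A B) : ∀ a ∈ A, k < a := by
  intro a ha
  have := (hf.mem_union a).1 (Or.inl ha); omega

lemma Feas.lt_of_mem_right {n : ℕ} {S : Finset ℕ} {k : ℕ} {A B : Finset ℕ}
    (hf : Feas n S (k + 1) A B) : ∀ b ∈ B, k < b := by
  intro b hb
  have := (hf.mem_union b).1 (Or.inr hb); omega

lemma feas_insert_both {n : ℕ} {S : Finset ℕ} {k : ℕ} {A B : Finset ℕ}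
    (hf : Feas n S (k + 1) A B) (hkn : k ≤ n) (hkS : k ∈ S) :
    Feas n S k (insert k A) (insert k B) := by
  refine feas_of_mem (fun i => ?_) (fun i => ?_)
  · simp only [Finset.mem_insert]
    by_cases hik : i = k
    · subst hik; simp [hkn]
    · simp only [hik, false_or]
      rw [hf.mem_union i]; omega
  · simp only [Finset.mem_insert]
    by_cases hik : i = k
    · subst hik; simp [hkS, hkn]
    · simp only [hik, false_or]
      rw [hf.mem_inter i]
      constructor <;> rintro ⟨a, b, c⟩ <;> exact ⟨a, by omega, c⟩

lemma feas_erase_both {n : ℕ} {S : Finset ℕ} {k : ℕ} {A B : Finset ℕ}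
    (hf : Feas n S k A B) (hkn : k ≤ n) (hkS : k ∈ S) :
    k ∈ A ∧ k ∈ B ∧ Feas n S (k + 1) (A.erase k) (B.erase k) := by
  have hk := (hf.mem_inter k).2 ⟨hkS, le_refl k, hkn⟩
  refine ⟨hk.1, hk.2, feas_of_mem (fun i => ?_) (fun i => ?_)⟩
  · simp only [Finset.mem_erase]
    by_cases hik : i = k
    · subst hik; simp
    · rw [← and_or_left]
      simp only [ne_eq, hik, not_false_iff, true_and]
      rw [hf.mem_union i]; omega
  · simp only [Finset.mem_erase]
    by_cases hik : i = k
    · subst hik; simp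
    · rw [show ((i ≠ k ∧ i ∈ A) ∧ i ≠ k ∧ i ∈ B) ↔ (i ≠ k ∧ (i ∈ A ∧ i ∈ B)) by tauto]
      simp only [ne_eq, hik, not_false_iff, true_and]
      rw [hf.mem_inter i]
      constructor <;> rintro ⟨a, b, c⟩ <;> exact ⟨a, by omega, c⟩

lemma feas_insert_left {n : ℕ} {S : Finset ℕ} {k : ℕ} {A B : Finset ℕ}
    (hf : Feas n S (k + 1) A B) (hkn : k ≤ n) (hkS : k ∉ S) :
    Feas n S k (insert k A) B := by
  have hkB : k ∉ B := fun h => by have := (hf.mem_union k).1 (Or.inr h); omega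
  refine feas_of_mem (fun i => ?_) (fun i => ?_)
  · simp only [Finset.mem_insert, or_assoc]
    by_cases hik : i = k
    · subst hik; simp [hkn]
    · simp only [hik, false_or]
      rw [hf.mem_union i]; omega
  · simp only [Finset.mem_insert]
    by_cases hik : i = k
    · subst hik; simp [hkB, hkS]
    · simp only [hik, false_or]
      rw [hf.mem_inter i]
      constructor <;> rintro ⟨a, b, c⟩ <;> exact ⟨a, by omega, c⟩

lemma feas_insert_right {n : ℕ} {S : Finset ℕ} {k : ℕ} {A B : Finset ℕ}
    (hf : Feas n S (k + 1) A B) (hkn : k ≤ n) (hkS : k ∉ S) :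
    Feas n S k A (insert k B) := by
  have hkA : k ∉ A := fun h => by have := (hf.mem_union k).1 (Or.inl h); omega
  refine feas_of_mem (fun i => ?_) (fun i => ?_)
  · simp only [Finset.mem_insert]
    by_cases hik : i = k
    · subst hik; simp [hkn]
    · simp only [hik, false_or]
      rw [hf.mem_union i]; omega
  · simp only [Finset.mem_insert]
    by_cases hik : i = k
    · subst hik; simp [hkA, hkS]
    · simp only [hik, false_or]
      rw [hf.mem_inter i]
      constructor <;> rintro ⟨a, b, c⟩ <;> exact ⟨a, by omega, c⟩

lemma feas_cases {n : ℕ} {S : Finset ℕ} {k : ℕ} {A B : Finset ℕ}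
    (hf : Feas n S k A B) (hkn : k ≤ n) (hkS : k ∉ S) :
    (k ∈ A ∧ k ∉ B ∧ Feas n S (k + 1) (A.erase k) B) ∨
    (k ∈ B ∧ k ∉ A ∧ Feas n S (k + 1) A (B.erase k)) := by
  have hmem := (hf.mem_union k).2 ⟨le_refl k, hkn⟩
  have hnot : ¬(k ∈ A ∧ k ∈ B) := fun hh => hkS ((hf.mem_inter k).1 hh).1
  rcases hmem with hA | hB
  · have hB : k ∉ B := fun hh => hnot ⟨hA, hh⟩
    refine Or.inl ⟨hA, hB, feas_of_mem (fun i => ?_) (fun i => ?_)⟩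
    · simp only [Finset.mem_erase]
      by_cases hik : i = k
      · subst hik; simp [hB]
      · simp only [ne_eq, hik, not_false_iff, true_and]
        rw [hf.mem_union i]; omega
    · simp only [Finset.mem_erase]
      by_cases hik : i = k
      · subst hik; simp [hB, hkS]
      · simp only [ne_eq, hik, not_false_iff, true_and]
        rw [hf.mem_inter i]
        constructor <;> rintro ⟨a, b, c⟩ <;> exact ⟨a, by omega, c⟩
  · have hA : k ∉ A := fun hh => hnot ⟨hh, hB⟩
    refine Or.inr ⟨hB, hA, feas_of_mem (fun i => ?_) (fun i => ?_)⟩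
    · simp only [Finset.mem_erase]
      by_cases hik : i = k
      · subst hik; simp [hA]
      · rw [show ((i ∈ A ∨ i ≠ k ∧ i ∈ B)) ↔ (i ∈ A ∨ (i ≠ k ∧ i ∈ B)) from Iff.rfl]
        simp only [ne_eq, hik, not_false_iff, true_and]
        rw [hf.mem_union i]; omega
    · simp only [Finset.mem_erase]
      by_cases hik : i = k
      · subst hik; simp [hA, hkS]
      · simp only [ne_eq, hik, not_false_iff, true_and]
        rw [show (i ∈ A ∧ i ∈ B) ↔ (i ∈ A ∧ i ∈ B) from Iff.rfl]
        rw [hf.mem_inter i]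
        constructor <;> rintro ⟨a, b, c⟩ <;> exact ⟨a, by omega, c⟩

theorem dp_value_function_recursion
    (n : ℕ) (C : ℕ → ℕ → ℝ) (hsym : ∀ i j, C i j = C j i)
    (S : Finset ℕ) (hS : S ⊆ Finset.Icc 1 n) (h1S : 1 ∈ S) (p : ℕ)
    (x y : ℕ) (hx : x ∈ Finset.Icc 1 n) (hy : y ∈ Finset.Icc 1 n)
    (h : ℕ) (hdef : h = max x y) (hhn : h < n)
    (heq : x = y → x ∈ S)
    (hgap : x ≠ y → S ∩ Finset.Icc (min x y + 1) h = ∅)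
    (m : ℤ) :
    (h + 1 ∈ S →
      V n C S p x y m =
        ((C x (h + 1) + C (h + 1) y : ℝ) : EReal) +
          V n C S p (h + 1) (h + 1) (m + 1)) ∧
    (h + 1 ∉ S →
      V n C S p x y m =
        min (((C x (h + 1) : ℝ) : EReal) + V n C S p (h + 1) y m)
          (((C (h + 1) y : ℝ) : EReal) + V n C S p x (h + 1) (m + 1))) := by
  subst hdef
  simp only [Finset.mem_Icc] at hx hy
  set k := max x y + 1 with hk
  have hxk : x < k := by omega
  have hyk : y < k := by omega
  have hkn : k ≤ n := by omega
  have hcond : ¬(x ≠ y ∧ (S ∩ Finset.Icc (min x y + 1) (max x y)).Nonempty) := by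
    rintro ⟨hne, a, ha⟩
    rw [hgap hne] at ha
    exact absurd ha (Finset.notMem_empty a)
  have hmaxky : max k y = k := by omega
  have hmaxxk : max x k = k := by omega
  constructor
  · -- case k ∈ S
    intro hkS
    simp only [V]
    rw [if_neg hcond, if_neg (by simp)]
    rw [ereal_add_iInf]
    apply le_antisymm
    · apply le_iInf
      rintro ⟨⟨A, B⟩, hfeas, hw1, hw2⟩
      have hfeas' : Feas n S (k + 1) A B := by
        have := feas_of_isFeas hfeas
        rwa [max_self] at this
      have hkB : k ∉ B := fun hh => by have := hfeas'.lt_of_mem_right k hh; omega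
      have hc : ((insert k B).card : ℤ) = (B.card : ℤ) + 1 := by
        rw [Finset.card_insert_of_notMem hkB]; push_cast; ring
      have w1 : ⌈((n : ℚ) + S.card - p) / 2⌉ ≤ m + ((insert k B).card : ℤ) := by
        rw [hc]; linarith
      have w2 : m + ((insert k B).card : ℤ) ≤ ⌊((n : ℚ) + S.card + p) / 2⌋ := by
        rw [hc]; linarith
      have hval : complLen C x y (insert k A) (insert k B)
          = (C x k + C k y) + complLen C k k A B := by
        rw [complLen_insert_left C x y k A (insert k B) hfeas'.lt_of_mem_left,
            complLen_insert_right C k y k A B hfeas'.lt_of_mem_right]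
        ring
      refine iInf_le_of_le ⟨⟨insert k A, insert k B⟩,
        isFeas_of_feas (feas_insert_both hfeas' hkn hkS), w1, w2⟩ ?_
      exact le_of_eq (by rw [← EReal.coe_add]; exact_mod_cast congrArg Real.toEReal hval)
    · apply le_iInf
      rintro ⟨⟨A, B⟩, hfeas, hw1, hw2⟩
      have hfeas' : Feas n S k A B := feas_of_isFeas hfeas
      obtain ⟨hkA, hkB, hf'⟩ := feas_erase_both hfeas' hkn hkS
      have hc : ((B.erase k).card : ℤ) + 1 = (B.card : ℤ) := by
        have h1 : (B.erase k).card + 1 = B.card := by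
          rw [Finset.card_erase_of_mem hkB]
          have : 0 < B.card := Finset.card_pos.2 ⟨k, hkB⟩
          omega
        exact_mod_cast h1
      have hw1' : ⌈((n : ℚ) + S.card - p) / 2⌉ ≤ m + (B.card : ℤ) := hw1
      have hw2' : m + (B.card : ℤ) ≤ ⌊((n : ℚ) + S.card + p) / 2⌋ := hw2
      have w1 : ⌈((n : ℚ) + S.card - p) / 2⌉ ≤ (m + 1) + ((B.erase k).card : ℤ) := by
        linarith
      have w2 : (m + 1) + ((B.erase k).card : ℤ) ≤ ⌊((n : ℚ) + S.card + p) / 2⌋ := by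
        linarith
      have hval : complLen C x y A B
          = (C x k + C k y) + complLen C k k (A.erase k) (B.erase k) := by
        conv_lhs => rw [(Finset.insert_erase hkA).symm, (Finset.insert_erase hkB).symm]
        rw [complLen_insert_left C x y k (A.erase k) (insert k (B.erase k))
              hf'.lt_of_mem_left,
            complLen_insert_right C k y k (A.erase k) (B.erase k)
              hf'.lt_of_mem_right]
        ring
      refine iInf_le_of_le ⟨⟨A.erase k, B.erase k⟩,
        isFeas_of_feas (by rwa [max_self]), w1, w2⟩ ?_
      exact le_of_eq (by rw [← EReal.coe_add]; exact_mod_cast (congrArg Real.toEReal hval).symm)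
  · -- case k ∉ S
    intro hkS
    have hempty1 : ¬(k ≠ y ∧ (S ∩ Finset.Icc (min k y + 1) (max k y)).Nonempty) := by
      rintro ⟨-, a, ha⟩
      rw [Finset.mem_inter, Finset.mem_Icc] at ha
      obtain ⟨haS, h1, h2⟩ := ha
      have hak : a ≠ k := fun e => hkS (e ▸ haS)
      by_cases hyx : y < x
      · have hmem : a ∈ S ∩ Finset.Icc (min x y + 1) (max x y) :=
          Finset.mem_inter.2 ⟨haS, Finset.mem_Icc.2 ⟨by omega, by omega⟩⟩
        rw [hgap (by omega)] at hmem
        exact absurd hmem (Finset.notMem_empty a)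
      · omega
    have hempty2 : ¬(x ≠ k ∧ (S ∩ Finset.Icc (min x k + 1) (max x k)).Nonempty) := by
      rintro ⟨-, a, ha⟩
      rw [Finset.mem_inter, Finset.mem_Icc] at ha
      obtain ⟨haS, h1, h2⟩ := ha
      have hak : a ≠ k := fun e => hkS (e ▸ haS)
      by_cases hxy : x < y
      · have hmem : a ∈ S ∩ Finset.Icc (min x y + 1) (max x y) :=
          Finset.mem_inter.2 ⟨haS, Finset.mem_Icc.2 ⟨by omega, by omega⟩⟩
        rw [hgap (by omega)] at hmem
        exact absurd hmem (Finset.notMem_empty a)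
      · omega
    simp only [V]
    rw [if_neg hcond, if_neg hempty1, if_neg hempty2]
    rw [ereal_add_iInf, ereal_add_iInf]
    apply le_antisymm
    · apply le_min
      · apply le_iInf
        rintro ⟨⟨A, B⟩, hfeas, hw1, hw2⟩
        have hfeas' : Feas n S (k + 1) A B := by
          have := feas_of_isFeas hfeas
          rwa [hmaxky] at this
        have hval : complLen C x y (insert k A) B = C x k + complLen C k y A B :=
          complLen_insert_left C x y k A B hfeas'.lt_of_mem_left
        refine iInf_le_of_le ⟨⟨insert k A, B⟩,
          isFeas_of_feas (feas_insert_left hfeas' hkn hkS), hw1, hw2⟩ ?_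
        exact le_of_eq (by rw [← EReal.coe_add]; exact_mod_cast congrArg Real.toEReal hval)
      · apply le_iInf
        rintro ⟨⟨A, B⟩, hfeas, hw1, hw2⟩
        have hfeas' : Feas n S (k + 1) A B := by
          have := feas_of_isFeas hfeas
          rwa [hmaxxk] at this
        have hkB : k ∉ B := fun hh => by have := hfeas'.lt_of_mem_right k hh; omega
        have hc : ((insert k B).card : ℤ) = (B.card : ℤ) + 1 := by
          rw [Finset.card_insert_of_notMem hkB]; push_cast; ring
        have w1 : ⌈((n : ℚ) + S.card - p) / 2⌉ ≤ m + ((insert k B).card : ℤ) := by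
          rw [hc]; linarith
        have w2 : m + ((insert k B).card : ℤ) ≤ ⌊((n : ℚ) + S.card + p) / 2⌋ := by
          rw [hc]; linarith
        have hval : complLen C x y A (insert k B) = C k y + complLen C x k A B :=
          complLen_insert_right C x y k A B hfeas'.lt_of_mem_right
        refine iInf_le_of_le ⟨⟨A, insert k B⟩,
          isFeas_of_feas (feas_insert_right hfeas' hkn hkS), w1, w2⟩ ?_
        exact le_of_eq (by rw [← EReal.coe_add]; exact_mod_cast congrArg Real.toEReal hval)
    · apply le_iInf
      rintro ⟨⟨A, B⟩, hfeas, hw1, hw2⟩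
      have hfeas' : Feas n S k A B := feas_of_isFeas hfeas
      rcases feas_cases hfeas' hkn hkS with ⟨hkA, hkB, hf'⟩ | ⟨hkB, hkA, hf'⟩
      · have hval : complLen C x y A B = C x k + complLen C k y (A.erase k) B := by
          conv_lhs => rw [(Finset.insert_erase hkA).symm]
          rw [complLen_insert_left C x y k (A.erase k) B hf'.lt_of_mem_left]
        refine min_le_of_left_le (iInf_le_of_le ⟨⟨A.erase k, B⟩,
          isFeas_of_feas (by rwa [hmaxky]), hw1, hw2⟩ ?_)
        exact le_of_eq (by rw [← EReal.coe_add]; exact_mod_cast (congrArg Real.toEReal hval).symm)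
      · have hc : ((B.erase k).card : ℤ) + 1 = (B.card : ℤ) := by
          have h1 : (B.erase k).card + 1 = B.card := by
            rw [Finset.card_erase_of_mem hkB]
            have : 0 < B.card := Finset.card_pos.2 ⟨k, hkB⟩
            omega
          exact_mod_cast h1
        have hw1' : ⌈((n : ℚ) + S.card - p) / 2⌉ ≤ m + (B.card : ℤ) := hw1
        have hw2' : m + (B.card : ℤ) ≤ ⌊((n : ℚ) + S.card + p) / 2⌋ := hw2
        have w1 : ⌈((n : ℚ) + S.card - p) / 2⌉ ≤ (m + 1) + ((B.erase k).card : ℤ) := by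
          linarith
        have w2 : (m + 1) + ((B.erase k).card : ℤ) ≤ ⌊((n : ℚ) + S.card + p) / 2⌋ := by
          linarith
        have hval : complLen C x y A B = C k y + complLen C x k A (B.erase k) := by
          conv_lhs => rw [(Finset.insert_erase hkB).symm]
          rw [complLen_insert_right C x y k A (B.erase k) hf'.lt_of_mem_right]
        refine min_le_of_right_le (iInf_le_of_le ⟨⟨A, B.erase k⟩,
          isFeas_of_feas (by rwa [hmaxxk]), w1, w2⟩ ?_)
        exact le_of_eq (by rw [← EReal.coe_add]; exact_mod_cast (congrArg Real.toEReal hval).symm)
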